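/- Let {M_n} be an inverse system of finitely generated Z_p-modules and {N_n} another inverse system, with compatible exact sequences 0 → C_n → M_n → N_n → D_n → 0 where each C_n and each D_n is finite. Suppose moreover that the induced maps on inverse limits satisfy lim C_n = 0 and lim D_n = 0. Then the induced map lim(M_n[p^∞]) → lim(N_n[p^∞]) is an isomorphism. -/

import Mathlib

/-- The inverse limit of an inverse system of `ℤ_[p]`-modules indexed by `ℕ`,
realized as the submodule of the product consisting of compatible sequences. -/
def InvLim (p : ℕ) [Fact p.Prime] (M : ℕ → Type)
    [∀ n, AddCommGroup (M n)] [∀ n, Module ℤ_[p] (M n)]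
    (t : ∀ n, M (n + 1) →ₗ[ℤ_[p]] M n) : Submodule ℤ_[p] (∀ n, M n) where
  carrier := {x | ∀ n, t n (x (n + 1)) = x n}
  add_mem' := by
    intro a b ha hb n
    simp only [Pi.add_apply, map_add, ha n, hb n]
  zero_mem' := by intro n; simp
  smul_mem' := by
    intro c a ha n
    simp only [Pi.smul_apply, map_smul, ha n]

/-- The map induced on inverse limits by a compatible family of linear maps. -/
noncomputable def InvLimMap {p : ℕ} [Fact p.Prime] {M N : ℕ → Type}
    [∀ n, AddCommGroup (M n)] [∀ n, Module ℤ_[p] (M n)]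
    [∀ n, AddCommGroup (N n)] [∀ n, Module ℤ_[p] (N n)]
    {tM : ∀ n, M (n + 1) →ₗ[ℤ_[p]] M n} {tN : ∀ n, N (n + 1) →ₗ[ℤ_[p]] N n}
    (f : ∀ n, M n →ₗ[ℤ_[p]] N n)
    (hcomp : ∀ n x, f n (tM n x) = tN n (f (n + 1) x)) :
    InvLim p M tM →ₗ[ℤ_[p]] InvLim p N tN where
  toFun x := ⟨fun n => f n (x.1 n), fun n => by
    rw [← hcomp n (x.1 (n + 1))]; exact congrArg (f n) (x.2 n)⟩
  map_add' x y := Subtype.ext (funext fun n => by simp)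
  map_smul' c x := Subtype.ext (funext fun n => by simp)

open CategoryTheory in
private lemma koenig_aux {S : ℕ → Type} [∀ n, Finite (S n)] [∀ n, Nonempty (S n)]
    (g : ∀ n, S (n + 1) → S n) :
    ∃ x : ∀ n, S n, ∀ n, g n (x (n + 1)) = x n := by
  let F := Functor.ofOpSequence (C := Type) (fun n => TypeCat.ofHom (g n))
  haveI : ∀ j : ℕᵒᵖ, Finite (F.obj j) := fun j => inferInstanceAs (Finite (S j.unop))
  haveI : ∀ j : ℕᵒᵖ, Nonempty (F.obj j) := fun j => inferInstanceAs (Nonempty (S j.unop))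
  obtain ⟨u, hu⟩ := nonempty_sections_of_finite_inverse_system F
  refine ⟨fun n => u ⟨n⟩, fun n => ?_⟩
  have := hu ((homOfLE (Nat.le_add_right n 1)).op)
  rwa [Functor.ofOpSequence_map_homOfLE_succ] at this

/-- Given inverse systems of finitely generated `ℤ_[p]`-modules with
compatible exact sequences `0 → C_n → M_n → N_n → D_n → 0` where each `C_n` and `D_n`
is finite, and `lim C_n = 0`, `lim D_n = 0`, the induced map
`lim (M_n[p^∞]) → lim (N_n[p^∞])` is an isomorphism. -/
theorem stmt12 (p : ℕ) [Fact p.Prime] (C M N D : ℕ → Type)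
    [∀ n, AddCommGroup (C n)] [∀ n, Module ℤ_[p] (C n)] [∀ n, Module.Finite ℤ_[p] (C n)]
    [∀ n, AddCommGroup (M n)] [∀ n, Module ℤ_[p] (M n)] [∀ n, Module.Finite ℤ_[p] (M n)]
    [∀ n, AddCommGroup (N n)] [∀ n, Module ℤ_[p] (N n)] [∀ n, Module.Finite ℤ_[p] (N n)]
    [∀ n, AddCommGroup (D n)] [∀ n, Module ℤ_[p] (D n)] [∀ n, Module.Finite ℤ_[p] (D n)]
    [∀ n, Finite (C n)] [∀ n, Finite (D n)]
    (tC : ∀ n, C (n + 1) →ₗ[ℤ_[p]] C n) (tM : ∀ n, M (n + 1) →ₗ[ℤ_[p]] M n)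
    (tN : ∀ n, N (n + 1) →ₗ[ℤ_[p]] N n) (tD : ∀ n, D (n + 1) →ₗ[ℤ_[p]] D n)
    (α : ∀ n, C n →ₗ[ℤ_[p]] M n) (f : ∀ n, M n →ₗ[ℤ_[p]] N n) (β : ∀ n, N n →ₗ[ℤ_[p]] D n)
    (hcα : ∀ n x, α n (tC n x) = tM n (α (n + 1) x))
    (hcf : ∀ n x, f n (tM n x) = tN n (f (n + 1) x))
    (hcβ : ∀ n x, β n (tN n x) = tD n (β (n + 1) x))
    (hαinj : ∀ n, Function.Injective (α n))
    (hβsurj : ∀ n, Function.Surjective (β n))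
    (hαf : ∀ n, LinearMap.range (α n) = LinearMap.ker (f n))
    (hfβ : ∀ n, LinearMap.range (f n) = LinearMap.ker (β n))
    (hlimC : ∀ x : InvLim p C tC, x = 0)
    (hlimD : ∀ x : InvLim p D tD, x = 0)
    (hTM : ∀ n, ∀ x ∈ Submodule.torsion ℤ_[p] (M (n + 1)),
      tM n x ∈ Submodule.torsion ℤ_[p] (M n))
    (hTN : ∀ n, ∀ x ∈ Submodule.torsion ℤ_[p] (N (n + 1)),
      tN n x ∈ Submodule.torsion ℤ_[p] (N n))
    (hfT : ∀ n, ∀ x ∈ Submodule.torsion ℤ_[p] (M n),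
      f n x ∈ Submodule.torsion ℤ_[p] (N n)) :
    Function.Bijective
      (InvLimMap (p := p)
        (M := fun n => ↥(Submodule.torsion ℤ_[p] (M n)))
        (N := fun n => ↥(Submodule.torsion ℤ_[p] (N n)))
        (tM := fun n => (tM n).restrict (hTM n))
        (tN := fun n => (tN n).restrict (hTN n))
        (fun n => (f n).restrict (hfT n))
        (fun n x => Subtype.ext (hcf n x.1))) := by
  constructor
  · rw [injective_iff_map_eq_zero]
    intro x hx
    have hx' : ∀ n, f n ((x.1 n : M n)) = 0 := fun n =>
      congrArg Subtype.val (congrFun (congrArg Subtype.val hx) n)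
    have hrange : ∀ n, ∃ c, α n c = (x.1 n : M n) := by
      intro n
      have h1 : (x.1 n : M n) ∈ LinearMap.range (α n) := by
        rw [hαf n]; exact LinearMap.mem_ker.mpr (hx' n)
      exact h1
    choose c hc using hrange
    have hcc : ∀ n, tC n (c (n + 1)) = c n := by
      intro n
      apply hαinj n
      rw [hcα n, hc (n + 1), hc n]
      exact congrArg Subtype.val (x.2 n)
    have h0 := hlimC ⟨c, hcc⟩
    have hc0 : ∀ n, c n = 0 := fun n => congrFun (congrArg Subtype.val h0) n
    apply Subtype.ext; funext n; apply Subtype.ext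
    show (x.1 n : M n) = 0
    rw [← hc n, hc0 n, map_zero]
  · intro y
    have hβy : ∀ n, β n (y.1 n : N n) = 0 := by
      have hcompat : ∀ n, tD n (β (n + 1) (y.1 (n + 1) : N (n + 1))) = β n (y.1 n : N n) := by
        intro n
        rw [← hcβ n]
        exact congrArg (β n) (congrArg Subtype.val (y.2 n))
      have h0 := hlimD ⟨fun n => β n (y.1 n : N n), hcompat⟩
      exact fun n => congrFun (congrArg Subtype.val h0) n
    have hyr : ∀ n, ∃ m, f n m = (y.1 n : N n) := by
      intro n
      have h1 : (y.1 n : N n) ∈ LinearMap.range (f n) := by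
        rw [hfβ n]; exact LinearMap.mem_ker.mpr (hβy n)
      exact h1
    let S : ℕ → Type := fun n =>
      {m : Submodule.torsion ℤ_[p] (M n) // f n (m : M n) = (y.1 n : N n)}
    haveI hSne : ∀ n, Nonempty (S n) := by
      intro n
      obtain ⟨m, hm⟩ := hyr n
      obtain ⟨r, hr⟩ := (Submodule.mem_torsion_iff _).mp (y.1 n).2
      have hrm : (r : ℤ_[p]) • m ∈ LinearMap.range (α n) := by
        rw [hαf n, LinearMap.mem_ker, map_smul, hm]
        simpa [Submonoid.smul_def] using hr
      obtain ⟨cc, hcc⟩ := hrm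
      set k : ℤ_[p] := (Nat.card (C n) : ℤ_[p]) with hk
      have hk0 : k ≠ 0 := by
        have : Nat.card (C n) ≠ 0 := Nat.card_ne_zero.mpr ⟨⟨0⟩, inferInstance⟩
        rw [hk]; exact Nat.cast_ne_zero.mpr this
      have hkc : k • cc = 0 := by
        rw [hk, Nat.cast_smul_eq_nsmul]
        exact card_nsmul_eq_zero'
      have htors : m ∈ Submodule.torsion ℤ_[p] (M n) := by
        refine (Submodule.mem_torsion_iff _).mpr
          ⟨⟨k * (r : ℤ_[p]), mem_nonZeroDivisors_of_ne_zero
            (mul_ne_zero hk0 (nonZeroDivisors.coe_ne_zero r))⟩, ?_⟩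
        show (k * (r : ℤ_[p])) • m = 0
        rw [mul_smul, ← hcc, ← map_smul, hkc, map_zero]
      exact ⟨⟨⟨m, htors⟩, hm⟩⟩
    haveI hSfin : ∀ n, Finite (S n) := by
      intro n
      obtain ⟨m0⟩ := hSne n
      have key : ∀ m : S n, ∃ cc, α n cc = (m.1 : M n) - (m0.1 : M n) := by
        intro m
        have h1 : (m.1 : M n) - (m0.1 : M n) ∈ LinearMap.range (α n) := by
          rw [hαf n, LinearMap.mem_ker, map_sub, m.2, m0.2, sub_self]
        exact h1
      choose φ hφ using key
      have hinj : Function.Injective φ := by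
        intro a b hab
        have h1 : (a.1 : M n) - (m0.1 : M n) = (b.1 : M n) - (m0.1 : M n) := by
          rw [← hφ a, ← hφ b, hab]
        exact Subtype.ext (Subtype.ext (sub_left_inj.mp h1))
      exact Finite.of_injective φ hinj
    let g : ∀ n, S (n + 1) → S n := fun n m =>
      ⟨⟨tM n (m.1 : M (n + 1)), hTM n _ m.1.2⟩, by
        show f n (tM n (m.1 : M (n + 1))) = (y.1 n : N n)
        rw [hcf n, m.2]
        exact congrArg Subtype.val (y.2 n)⟩
    obtain ⟨x, hx⟩ := koenig_aux g
    refine ⟨⟨fun n => (x n).1, fun n => ?_⟩, ?_⟩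
    · exact congrArg Subtype.val (hx n)
    · exact Subtype.ext (funext fun n => Subtype.ext ((x n).2))
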